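/- Let c, h₁ ∈ ℂ with c ≠ 0 and h₁ ≠ 0, let k₂ ∈ ℂ, and set a = 1, b = 0. The ℂ-bilinear product ∘ on A defined on basis elements by L_m∘L_n = cL_{m+n+1} − (n+1)L_{m+n}, L_m∘W_n = h₁L_{m+n+1} − (n+1)W_{m+n}, W_m∘L_n = h₁L_{m+n+1} and W_m∘W_n = (h₁(h₁−k₂)/c)L_{m+n+1} + k₂W_{m+n+1} is left-symmetric, and it is a compatible left-symmetric algebraic structure on the Lie algebra Coeff(W(1,0)). -/

import Mathlib

noncomputable section

set_option maxHeartbeats 1000000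

/-- `A` is the free `ℂ`-vector space with basis `{L m : m ∈ ℤ} ∪ {W m : m ∈ ℤ}`. -/
abbrev A : Type := (ℤ ⊕ ℤ) →₀ ℂ

/-- The basis vector `L m`. -/
def L (m : ℤ) : A := Finsupp.single (Sum.inl m) 1

/-- The basis vector `W m`. -/
def W (m : ℤ) : A := Finsupp.single (Sum.inr m) 1

/-- Corollary 3.8 (8), on Coeff(W(1,0)), with `c ≠ 0`, `h₁ ≠ 0`. -/
theorem stmt17 (c h₁ k₂ : ℂ) (hc : c ≠ 0) (hh : h₁ ≠ 0)
    -- `M` is the ℂ-bilinear product `∘` given on basis elements by: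
    (M : A →ₗ[ℂ] A →ₗ[ℂ] A)
    (hLL : ∀ m n : ℤ, M (L m) (L n) = c • L (m + n + 1) - ((n : ℂ) + 1) • L (m + n))
    (hLW : ∀ m n : ℤ, M (L m) (W n) = h₁ • L (m + n + 1) - ((n : ℂ) + 1) • W (m + n))
    (hWL : ∀ m n : ℤ, M (W m) (L n) = h₁ • L (m + n + 1))
    (hWW : ∀ m n : ℤ, M (W m) (W n) =
      (h₁ * (h₁ - k₂) / c) • L (m + n + 1) + k₂ • W (m + n + 1))
    -- `B` is the ℂ-bilinear Lie bracket of Coeff(W(a,b)) on basis elements: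
    (B : A →ₗ[ℂ] A →ₗ[ℂ] A)
    (hBLL : ∀ m n : ℤ, B (L m) (L n) = ((m : ℂ) - (n : ℂ)) • L (m + n))
    (hBLW : ∀ m n : ℤ, B (L m) (W n) =
      (((m : ℂ) + 1) * ((1 : ℂ) - 1) - ((n : ℂ) + 1)) • W (m + n)
        + (0 : ℂ) • W (m + n + 1))
    (hBWL : ∀ m n : ℤ, B (W n) (L m) = -B (L m) (W n))
    (hBWW : ∀ m n : ℤ, B (W m) (W n) = 0) :
    -- `∘ = M` is left-symmetric:
    ((∀ x y z : A, M (M x y) z - M x (M y z) = M (M y x) z - M y (M x z)) ∧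
    -- and compatible with the Lie bracket:
    (∀ x y : A, M x y - M y x = B x y)) := by
  have hLd : ∀ m : ℤ, (Finsupp.single (Sum.inl m) (1:ℂ) : A) = L m := fun _ => rfl
  have hWd : ∀ m : ℤ, (Finsupp.single (Sum.inr m) (1:ℂ) : A) = W m := fun _ => rfl
  have hsm : ∀ (i : ℤ ⊕ ℤ) (r : ℂ),
      (Finsupp.single i r : A) = r • Finsupp.single i 1 := by
    intro i r
    rw [Finsupp.smul_single, smul_eq_mul, mul_one]
  -- base case for left-symmetry, on basis vectors
  have key1 : ∀ i j k : ℤ ⊕ ℤ,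
      M (M (Finsupp.single i 1) (Finsupp.single j 1)) (Finsupp.single k 1)
        - M (Finsupp.single i 1) (M (Finsupp.single j 1) (Finsupp.single k 1))
      = M (M (Finsupp.single j 1) (Finsupp.single i 1)) (Finsupp.single k 1)
        - M (Finsupp.single j 1) (M (Finsupp.single i 1) (Finsupp.single k 1)) := by
    rintro (m|m) (n|n) (p|p) <;>
      simp only [hLd, hWd] <;>
      simp only [hLL, hLW, hWL, hWW, map_smul, map_sub, map_add,
        LinearMap.smul_apply, LinearMap.sub_apply, LinearMap.add_apply,
        smul_sub, smul_add, smul_smul] <;>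
      push_cast <;>
      ring_nf <;>
      match_scalars <;> (try ring1) <;> field_simp <;> try ring
  -- base case for compatibility, on basis vectors
  have key2 : ∀ i j : ℤ ⊕ ℤ,
      M (Finsupp.single i 1) (Finsupp.single j 1)
        - M (Finsupp.single j 1) (Finsupp.single i 1)
      = B (Finsupp.single i 1) (Finsupp.single j 1) := by
    rintro (m|m) (n|n) <;>
      simp only [hLd, hWd] <;>
      simp only [hLL, hLW, hWL, hWW, hBLL, hBLW, hBWL, hBWW, map_smul, map_sub,
        map_add, map_neg, LinearMap.smul_apply, LinearMap.sub_apply,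
        LinearMap.add_apply, LinearMap.neg_apply, smul_sub, smul_add, smul_smul] <;>
      push_cast <;>
      ring_nf <;>
      match_scalars <;> (try ring1) <;> field_simp <;> try ring
  constructor
  · -- left-symmetry: extend from basis by trilinearity
    have step1 : ∀ (i j : ℤ ⊕ ℤ) (z : A),
        M (M (Finsupp.single i 1) (Finsupp.single j 1)) z
          - M (Finsupp.single i 1) (M (Finsupp.single j 1) z)
        = M (M (Finsupp.single j 1) (Finsupp.single i 1)) z
          - M (Finsupp.single j 1) (M (Finsupp.single i 1) z) := by
      intro i j z
      induction z using Finsupp.induction_linear with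
      | zero => simp
      | add f g hf hg =>
        simp only [map_add]
        rw [add_sub_add_comm, add_sub_add_comm, hf, hg]
      | single k r =>
        rw [hsm k r]
        simp only [map_smul]
        rw [← smul_sub, ← smul_sub, key1]
    have step2 : ∀ (i : ℤ ⊕ ℤ) (y z : A),
        M (M (Finsupp.single i 1) y) z - M (Finsupp.single i 1) (M y z)
        = M (M y (Finsupp.single i 1)) z - M y (M (Finsupp.single i 1) z) := by
      intro i y z
      induction y using Finsupp.induction_linear with
      | zero => simp
      | add f g hf hg =>
        simp only [map_add, LinearMap.add_apply]
        rw [add_sub_add_comm, add_sub_add_comm, hf, hg]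
      | single j r =>
        rw [hsm j r]
        simp only [map_smul, LinearMap.smul_apply]
        rw [← smul_sub, ← smul_sub, step1]
    intro x y z
    induction x using Finsupp.induction_linear with
    | zero => simp
    | add f g hf hg =>
      simp only [map_add, LinearMap.add_apply]
      rw [add_sub_add_comm, add_sub_add_comm, hf, hg]
    | single i r =>
      rw [hsm i r]
      simp only [map_smul, LinearMap.smul_apply]
      rw [← smul_sub, ← smul_sub, step2]
  · -- compatibility: extend from basis by bilinearity
    have step1 : ∀ (i : ℤ ⊕ ℤ) (y : A),
        M (Finsupp.single i 1) y - M y (Finsupp.single i 1)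
        = B (Finsupp.single i 1) y := by
      intro i y
      induction y using Finsupp.induction_linear with
      | zero => simp
      | add f g hf hg =>
        simp only [map_add, LinearMap.add_apply]
        rw [add_sub_add_comm, hf, hg]
      | single j r =>
        rw [hsm j r]
        simp only [map_smul, LinearMap.smul_apply]
        rw [← smul_sub, key2]
    intro x y
    induction x using Finsupp.induction_linear with
    | zero => simp
    | add f g hf hg =>
      simp only [map_add, LinearMap.add_apply]
      rw [add_sub_add_comm, hf, hg]
    | single i r =>
      rw [hsm i r]
      simp only [map_smul, LinearMap.smul_apply]
      rw [← smul_sub, step1]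

end
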